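/- Let m ≥ 1 be an integer and ε > 0. Then, almost surely, there exists a (random) finite N such that for all n ≥ N: l(n) ≤ (1/λ_*) · (log n + log_{(2)} n + ... + log_{(m−1)} n + (1+ε) log_{(m)} n), where log_{(1)} x = log x and log_{(k+1)} x = log(log_{(k)} x) are the iterated logarithms (in particular, for m = 1 the bound reads l(n) ≤ (1+ε)(log n)/λ_*). -/

import Mathlib

open MeasureTheory ProbabilityTheory Filter
open scoped ENNReal

noncomputable section

/-- The random walk `S_n = X_1 + ... + X_n` in `ℤ^d`, with `S_0 = 0`. -/
def walk (d : ℕ) {Ω : Type*} (X : ℕ → Ω → (Fin d → ℤ)) (n : ℕ) (ω : Ω) : Fin d → ℤ :=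
  ∑ i ∈ Finset.range n, X i ω

/-- The local time `l(n,x) = Σ_{i=0}^n 1{S_i = x}` of the site `x` up to time `n`. -/
def localTime (d : ℕ) {Ω : Type*} (X : ℕ → Ω → (Fin d → ℤ)) (n : ℕ) (x : Fin d → ℤ)
    (ω : Ω) : ℕ :=
  ∑ i ∈ Finset.range (n + 1), if walk d X i ω = x then 1 else 0

/-- `γ = P(S_n ≠ 0 for all n ≥ 1)`, the probability of no return to the origin. -/
def noReturnProb (d : ℕ) {Ω : Type*} [MeasurableSpace Ω] (μ : Measure Ω)
    (X : ℕ → Ω → (Fin d → ℤ)) : ℝ :=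
  (μ {ω | ∀ n : ℕ, 1 ≤ n → walk d X n ω ≠ 0}).toReal

/-- The maximal local time `l(n) = max{l(n,x) : x ∈ ℤ^d}`; the maximum over all of `ℤ^d`
is attained at a visited site `S_i`, `0 ≤ i ≤ n` (elsewhere the local time is `0`). -/
def maxLocalTime (d : ℕ) {Ω : Type*} (X : ℕ → Ω → (Fin d → ℤ)) (n : ℕ) (ω : Ω) : ℕ :=
  (Finset.range (n + 1)).sup fun i => localTime d X n (walk d X i ω) ω

/-- Iterated logarithm: `itlog 1 x = log x`, `itlog (k+1) x = log (itlog k x)`. -/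
def itlog : ℕ → ℝ → ℝ
  | 0, x => x
  | k + 1, x => Real.log (itlog k x)

namespace SRW9


def EE : ℕ → ℝ
  | 0 => 3
  | k + 1 => Real.exp (EE k)

lemma EE_ge3 : ∀ k, (3:ℝ) ≤ EE k
  | 0 => le_refl _
  | k + 1 => by
    have h := EE_ge3 k
    have h2 := Real.add_one_le_exp (EE k)
    show (3:ℝ) ≤ Real.exp (EE k)
    linarith

lemma EE_pos (k : ℕ) : (0:ℝ) < EE k := lt_of_lt_of_le (by norm_num) (EE_ge3 k)

lemma EE_mono : Monotone EE := monotone_nat_of_le_succ fun k => by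
  have h2 := Real.add_one_le_exp (EE k)
  show EE k ≤ Real.exp (EE k); linarith

lemma itlog_zero (x : ℝ) : itlog 0 x = x := rfl

lemma itlog_succ (k : ℕ) (x : ℝ) : itlog (k+1) x = Real.log (itlog k x) := rfl

lemma itlog_succ' : ∀ (k : ℕ) (x : ℝ), itlog (k+1) x = itlog k (Real.log x)
  | 0, x => rfl
  | k+1, x => by rw [itlog_succ (k+1) x, itlog_succ' k x, itlog_succ]

lemma le_itlog : ∀ (k : ℕ) {x : ℝ}, EE k ≤ x → (3:ℝ) ≤ itlog k x
  | 0, x, h => h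
  | k+1, x, h => by
    have hlog : EE k ≤ Real.log x := by
      rw [← Real.log_exp (EE k)]
      exact Real.log_le_log (Real.exp_pos _) h
    rw [itlog_succ']
    exact le_itlog k hlog

lemma itlog_pos {k : ℕ} {x : ℝ} (h : EE k ≤ x) : 0 < itlog k x :=
  lt_of_lt_of_le (by norm_num) (le_itlog k h)

lemma x_pos_of_EE {k : ℕ} {x : ℝ} (h : EE k ≤ x) : 0 < x :=
  lt_of_lt_of_le (EE_pos k) h

lemma itlog_mono : ∀ (k : ℕ) {x y : ℝ}, EE k ≤ x → x ≤ y → itlog k x ≤ itlog k y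
  | 0, _, _, _, h => h
  | k+1, x, y, hx, hxy => by
    rw [itlog_succ', itlog_succ']
    refine itlog_mono k ?_ (Real.log_le_log (x_pos_of_EE hx) hxy)
    rw [← Real.log_exp (EE k)]
    exact Real.log_le_log (Real.exp_pos _) hx

lemma itlog_tendsto : ∀ k : ℕ, Tendsto (itlog k) atTop atTop
  | 0 => tendsto_id
  | k+1 => by
    have h : itlog (k+1) = (itlog k) ∘ Real.log := funext fun x => itlog_succ' k x
    rw [h]
    exact (itlog_tendsto k).comp Real.tendsto_log_atTop

lemma exp_itlog {k : ℕ} {x : ℝ} (h : EE k ≤ x) : Real.exp (itlog (k+1) x) = itlog k x :=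
  Real.exp_log (itlog_pos h)

lemma itlog_hasDeriv : ∀ (k : ℕ) {x : ℝ}, EE k ≤ x →
    HasDerivAt (itlog k) (∏ j ∈ Finset.range k, itlog j x)⁻¹ x
  | 0, x, _ => by simp only [Finset.range_zero, Finset.prod_empty, inv_one]; exact hasDerivAt_id x
  | k+1, x, h => by
    have hx : 0 < x := x_pos_of_EE h
    have hlx : EE k ≤ Real.log x := by
      rw [← Real.log_exp (EE k)]
      exact Real.log_le_log (Real.exp_pos _) h
    have h1 : HasDerivAt Real.log x⁻¹ x := Real.hasDerivAt_log (ne_of_gt hx)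
    have h3 := (itlog_hasDeriv k hlx).comp x h1
    have heq : (itlog k) ∘ Real.log = itlog (k+1) := funext fun y => (itlog_succ' k y).symm
    rw [heq] at h3
    refine h3.congr_deriv ?_
    symm
    rw [Finset.prod_range_succ', itlog_zero, mul_inv]
    congr 1
    congr 1
    exact Finset.prod_congr rfl fun j _ => itlog_succ' j x

variable (m : ℕ) (ε : ℝ)


def hfun (x : ℝ) : ℝ := (∏ j ∈ Finset.range (m-1), itlog j x) * (itlog (m-1) x) ^ (1+ε)
def gfun (x : ℝ) : ℝ := (itlog (m-1) x) ^ (-ε)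

variable {m ε}

lemma EE_le_of_le {k : ℕ} {x : ℝ} (hk : k ≤ m) (hx : EE m ≤ x) : EE k ≤ x :=
  le_trans (EE_mono hk) hx

lemma prod_pos {x : ℝ} (hx : EE m ≤ x) (p : ℕ) (hp : p ≤ m) :
    0 < ∏ j ∈ Finset.range p, itlog j x :=
  Finset.prod_pos fun j hj =>
    itlog_pos (EE_le_of_le (le_trans (le_of_lt (Finset.mem_range.mp hj)) hp) hx)

lemma hfun_pos (hε : 0 < ε) {x : ℝ} (hx : EE m ≤ x) : 0 < hfun m ε x := by
  have h1 := prod_pos hx (m-1) (Nat.sub_le _ _)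
  have h2 : 0 < itlog (m-1) x := itlog_pos (EE_le_of_le (Nat.sub_le _ _) hx)
  exact mul_pos h1 (Real.rpow_pos_of_pos h2 _)

lemma hfun_mono (hε : 0 < ε) {x y : ℝ} (hx : EE m ≤ x) (hxy : x ≤ y) :
    hfun m ε x ≤ hfun m ε y := by
  have hmono : ∀ j ≤ m, itlog j x ≤ itlog j y := fun j hj =>
    itlog_mono j (EE_le_of_le hj hx) hxy
  have h2 : 0 < itlog (m-1) x := itlog_pos (EE_le_of_le (Nat.sub_le _ _) hx)
  refine mul_le_mul ?_ ?_ (Real.rpow_nonneg h2.le _) ?_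
  · exact Finset.prod_le_prod
      (fun j hj => (itlog_pos (EE_le_of_le (le_trans (Finset.mem_range.mp hj).le
        (Nat.sub_le _ _)) hx)).le)
      (fun j hj => hmono j (le_trans (Finset.mem_range.mp hj).le (Nat.sub_le _ _)))
  · exact Real.rpow_le_rpow h2.le (hmono (m-1) (Nat.sub_le _ _)) (by linarith)
  · exact Finset.prod_nonneg fun j hj => (itlog_pos (EE_le_of_le (le_trans
        (Finset.mem_range.mp hj).le (Nat.sub_le _ _)) (le_trans hx hxy))).le

lemma exp_A (hm : 1 ≤ m) (hε : 0 < ε) {x : ℝ} (hx : EE m ≤ x) :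
    Real.exp ((∑ k ∈ Finset.Ico 1 m, itlog k x) + (1+ε) * itlog m x) = hfun m ε x := by
  rw [Real.exp_add, Real.exp_sum]
  have h1 : ∏ k ∈ Finset.Ico 1 m, Real.exp (itlog k x)
      = ∏ j ∈ Finset.range (m-1), itlog j x := by
    rw [Finset.prod_Ico_eq_prod_range]
    refine Finset.prod_congr rfl fun j hj => ?_
    have hj' := Finset.mem_range.mp hj
    have : (1 + j) = j + 1 := by omega
    rw [this]
    exact exp_itlog (EE_le_of_le (by omega) hx)
  have h2 : Real.exp ((1+ε) * itlog m x) = (itlog (m-1) x) ^ (1+ε) := by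
    have hm1 : m - 1 + 1 = m := by omega
    have h3 : Real.exp (itlog m x) = itlog (m-1) x := by
      rw [← hm1]; exact exp_itlog (EE_le_of_le (Nat.sub_le _ _) hx)
    rw [← h3, ← Real.exp_mul, mul_comm]
  rw [h1, h2]; rfl

lemma gfun_hasDeriv (hm : 1 ≤ m) (hε : 0 < ε) {x : ℝ} (hx : EE m ≤ x) :
    HasDerivAt (gfun m ε) (-(ε / hfun m ε x)) x := by
  have h2 : 0 < itlog (m-1) x := itlog_pos (EE_le_of_le (Nat.sub_le _ _) hx)
  have hd := (itlog_hasDeriv (m-1) (EE_le_of_le (Nat.sub_le _ _) hx)).rpow_const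
    (p := -ε) (Or.inl (ne_of_gt h2))
  refine hd.congr_deriv ?_
  symm
  have hprod := prod_pos hx (m-1) (Nat.sub_le _ _)
  have hr : itlog (m-1) x ^ (-ε - 1) = (itlog (m-1) x ^ (1+ε))⁻¹ := by
    rw [show -ε - 1 = -(1+ε) by ring, Real.rpow_neg h2.le]
  rw [hr, hfun]
  have h3 : (0:ℝ) < itlog (m-1) x ^ (1+ε) := Real.rpow_pos_of_pos h2 _
  field_simp

lemma summable_inv_hfun (hm : 1 ≤ m) (hε : 0 < ε) :
    Summable (fun n : ℕ => if EE m ≤ (n:ℝ) then (hfun m ε n)⁻¹ else 0) := by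
  set n₀ : ℕ := ⌈EE m⌉₊ with hn₀
  have hcast : ∀ n : ℕ, n₀ ≤ n → EE m ≤ (n:ℝ) := fun n hn =>
    le_trans (Nat.le_ceil _) (by exact_mod_cast Nat.cast_le.mpr hn)
  -- key step bound
  have key : ∀ n : ℕ, n₀ ≤ n → (hfun m ε (n+1:ℕ))⁻¹ ≤ (gfun m ε n - gfun m ε (n+1:ℕ))/ε := by
    intro n hn
    have hxn : EE m ≤ (n:ℝ) := hcast n hn
    have hlt : (n:ℝ) < (n:ℝ)+1 := by linarith
    obtain ⟨c, hc, hslope⟩ := exists_hasDerivAt_eq_slope (gfun m ε)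
      (fun x => -(ε / hfun m ε x)) hlt
      (fun x hx => (gfun_hasDeriv hm hε (le_trans hxn hx.1)).continuousAt.continuousWithinAt)
      (fun x hx => gfun_hasDeriv hm hε (le_trans hxn hx.1.le))
    have hcx : EE m ≤ c := le_trans hxn hc.1.le
    have h1 : hfun m ε c ≤ hfun m ε ((n:ℝ)+1) := hfun_mono hε hcx hc.2.le
    have hpc := hfun_pos hε hcx
    have hpn1 : 0 < hfun m ε ((n:ℝ)+1) := hfun_pos hε (le_trans hxn (by linarith))
    have hs2 : gfun m ε (n:ℝ) - gfun m ε ((n:ℝ)+1) = ε / hfun m ε c := by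
      have : ((n:ℝ)+1) - n = 1 := by ring
      rw [this, div_one] at hslope
      linarith
    have h4 : ε / hfun m ε ((n:ℝ)+1) ≤ ε / hfun m ε c :=
      div_le_div_of_nonneg_left hε.le hpc h1
    have hc1 : ((n+1:ℕ):ℝ) = (n:ℝ)+1 := by push_cast; ring
    rw [hc1, le_div_iff₀ hε, hs2]
    have hinv : (hfun m ε ((n:ℝ)+1))⁻¹ ≤ (hfun m ε c)⁻¹ := by
      apply inv_anti₀ hpc h1
    calc (hfun m ε ((n:ℝ)+1))⁻¹ * ε ≤ (hfun m ε c)⁻¹ * ε :=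
          mul_le_mul_of_nonneg_right hinv hε.le
      _ = ε / hfun m ε c := by rw [div_eq_mul_inv, mul_comm]
  -- nonnegativity of terms
  have hterm_nonneg : ∀ n : ℕ, 0 ≤ (if EE m ≤ (n:ℝ) then (hfun m ε n)⁻¹ else 0) := by
    intro n
    by_cases h : EE m ≤ (n:ℝ)
    · simp only [h, if_true]; exact (inv_pos.mpr (hfun_pos hε h)).le
    · simp [h]
  have hgnonneg : ∀ x : ℝ, EE m ≤ x → 0 ≤ gfun m ε x := fun x hx =>
    Real.rpow_nonneg (itlog_pos (EE_le_of_le (Nat.sub_le _ _) hx)).le _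
  set T : ℕ → ℝ := fun n => if EE m ≤ (n:ℝ) then (hfun m ε n)⁻¹ else 0 with hT
  have hn₀EE : EE m ≤ (n₀:ℝ) := Nat.le_ceil _
  refine summable_of_sum_range_le (c := (∑ i ∈ Finset.range (n₀+1), T i)
    + gfun m ε n₀ / ε) hterm_nonneg ?_
  intro M
  rcases le_or_gt M (n₀+1) with hM | hM
  · have h1 : ∑ i ∈ Finset.range M, T i ≤ ∑ i ∈ Finset.range (n₀+1), T i :=
      Finset.sum_le_sum_of_subset_of_nonneg (Finset.range_subset_range.mpr hM)
        (fun i _ _ => hterm_nonneg i)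
    have h2 : 0 ≤ gfun m ε n₀ / ε := div_nonneg (hgnonneg _ hn₀EE) hε.le
    linarith
  · have hsplit : ∑ i ∈ Finset.range M, T i
        = ∑ i ∈ Finset.range (n₀+1), T i + ∑ i ∈ Finset.Ico (n₀+1) M, T i := by
      rw [Finset.range_eq_Ico, Finset.range_eq_Ico]
      exact (Finset.sum_Ico_consecutive (f := T) (Nat.zero_le _) hM.le).symm
    rw [hsplit]
    have htail : ∑ i ∈ Finset.Ico (n₀+1) M, T i ≤ gfun m ε n₀ / ε := by
      have hstep : ∀ i ∈ Finset.Ico (n₀+1) M, T i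
          ≤ (gfun m ε ((i-1:ℕ):ℝ) - gfun m ε (i:ℕ))/ε := by
        intro i hi
        obtain ⟨hi1, hi2⟩ := Finset.mem_Ico.mp hi
        have h1 : n₀ ≤ i - 1 := by omega
        have h2 := key (i-1) h1
        have h3 : (i - 1 + 1 : ℕ) = i := by omega
        rw [h3] at h2
        have h4 : EE m ≤ (i:ℝ) := hcast i (by omega)
        simpa [hT, h4] using h2
      have h5 : ∑ i ∈ Finset.Ico (n₀+1) M, T i
          ≤ ∑ i ∈ Finset.Ico (n₀+1) M, (gfun m ε ((i-1:ℕ):ℝ) - gfun m ε (i:ℕ))/ε :=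
        Finset.sum_le_sum hstep
      have h6 : ∑ i ∈ Finset.Ico (n₀+1) M, (gfun m ε ((i-1:ℕ):ℝ) - gfun m ε (i:ℕ))/ε
          = (gfun m ε ((n₀:ℕ):ℝ) - gfun m ε ((n₀ + (M - (n₀+1)) : ℕ):ℝ))/ε := by
        rw [Finset.sum_Ico_eq_sum_range]
        have h7 : ∀ i ∈ Finset.range (M - (n₀+1)), (gfun m ε (((n₀+1+i)-1:ℕ):ℝ)
            - gfun m ε ((n₀+1+i:ℕ):ℝ))/ε
            = ((fun j => gfun m ε ((n₀+j:ℕ):ℝ)) i - (fun j => gfun m ε ((n₀+j:ℕ):ℝ)) (i+1))/ε := by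
          intro i _
          have e1 : (n₀+1+i) - 1 = n₀ + i := by omega
          have e2 : n₀+1+i = n₀ + (i+1) := by omega
          rw [e1, e2]
        rw [Finset.sum_congr rfl h7, ← Finset.sum_div, Finset.sum_range_sub']
        norm_num
      refine (h5.trans_eq h6).trans ?_
      have h8 : 0 ≤ gfun m ε ((n₀ + (M - (n₀+1)) : ℕ):ℝ) := hgnonneg _
        (hcast _ (by omega))
      have h10 : gfun m ε ((n₀:ℕ):ℝ) - gfun m ε ((n₀ + (M - (n₀+1)) : ℕ):ℝ)
          ≤ gfun m ε ((n₀:ℕ):ℝ) := by linarith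
      exact (div_le_div_iff_of_pos_right hε).mpr h10
    linarith



variable {Ω : Type*} [MeasurableSpace Ω] {μ : Measure Ω} [IsProbabilityMeasure μ]
variable {d : ℕ} {X : ℕ → Ω → (Fin d → ℤ)}

/-- block increment sums -/
def bsum (d : ℕ) {Ω : Type*} (X : ℕ → Ω → (Fin d → ℤ)) (a u : ℕ) (ω : Ω) : Fin d → ℤ :=
  ∑ r ∈ Finset.range u, X (a + r) ω

/-- the tuple of increments `X_a, ..., X_{a+p-1}` -/
def tup (d : ℕ) {Ω : Type*} (X : ℕ → Ω → (Fin d → ℤ)) (a p : ℕ) (ω : Ω) :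
    Fin p → (Fin d → ℤ) := fun i => X (a + (i : ℕ)) ω

/-- partial sums of a tuple -/
def psum (d : ℕ) {p : ℕ} (g : Fin p → (Fin d → ℤ)) (u : ℕ) : Fin d → ℤ :=
  ∑ i ∈ Finset.univ.filter (fun i : Fin p => (i : ℕ) < u), g i

def cnt (d : ℕ) {Ω : Type*} (X : ℕ → Ω → (Fin d → ℤ)) (t h : ℕ) (ω : Ω) : ℕ :=
  ((Finset.Icc 1 h).filter (fun s => bsum d X t s ω = 0)).card

/-- at least `j` returns to `S_t` after time `t` (at some horizon) -/
def Ev (d : ℕ) {Ω : Type*} (X : ℕ → Ω → (Fin d → ℤ)) (t j : ℕ) : Set Ω :=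
  ⋃ h : ℕ, {ω | j ≤ cnt d X t h ω}

/-- first return to `S_t` after `t` happens at time `t+s` -/
def Fv (d : ℕ) {Ω : Type*} (X : ℕ → Ω → (Fin d → ℤ)) (t s : ℕ) : Set Ω :=
  {ω | bsum d X t s ω = 0 ∧ ∀ r, 1 ≤ r → r < s → bsum d X t r ω ≠ 0}

lemma meas_tup (hmeas : ∀ i, Measurable (X i)) (a p : ℕ) : Measurable (tup d X a p) :=
  measurable_pi_lambda _ fun i => hmeas _

lemma psum_tup (a p : ℕ) (ω : Ω) {u : ℕ} (hu : u ≤ p) :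
    psum d (tup d X a p ω) u = bsum d X a u ω := by
  induction u with
  | zero => simp [psum, bsum]
  | succ u ih =>
    have hu' : u ≤ p := by omega
    have hup : u < p := by omega
    have hfilter : Finset.univ.filter (fun i : Fin p => (i : ℕ) < u + 1)
        = insert (⟨u, hup⟩ : Fin p) (Finset.univ.filter (fun i : Fin p => (i : ℕ) < u)) := by
      ext i
      simp only [Finset.mem_filter, Finset.mem_univ, true_and, Finset.mem_insert, Fin.ext_iff]
      omega
    unfold psum at *
    rw [hfilter, Finset.sum_insert (by simp), ih hu']
    unfold bsum
    rw [Finset.sum_range_succ]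
    unfold tup
    abel

lemma bsum_add (a s u : ℕ) (ω : Ω) :
    bsum d X a (s + u) ω = bsum d X a s ω + bsum d X (a + s) u ω := by
  unfold bsum
  rw [Finset.sum_range_add]
  congr 1
  exact Finset.sum_congr rfl fun r _ => by rw [Nat.add_assoc]

lemma walk_bsum (t s : ℕ) (ω : Ω) :
    walk d X (t + s) ω = walk d X t ω + bsum d X t s ω := by
  unfold walk bsum
  rw [Finset.sum_range_add]

lemma walk_eq_iff (t s : ℕ) (ω : Ω) :
    walk d X (t + s) ω = walk d X t ω ↔ bsum d X t s ω = 0 := by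
  rw [walk_bsum]
  constructor
  · intro h; have := congrArg (fun z => z - walk d X t ω) h; simpa using this
  · intro h; rw [h]; simp

lemma bsum_zero_walk (u : ℕ) (ω : Ω) : bsum d X 0 u ω = walk d X u ω := by
  unfold bsum walk
  exact Finset.sum_congr rfl fun r _ => by rw [Nat.zero_add]





variable {Ω : Type*} [MeasurableSpace Ω] {μ : Measure Ω} [IsProbabilityMeasure μ]
variable {d : ℕ} {X : ℕ → Ω → (Fin d → ℤ)}

lemma meas_single (hmeas : ∀ i, Measurable (X i)) (hident : ∀ i, μ.map (X i) = μ.map (X 0))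
    (i : ℕ) (c : Fin d → ℤ) : μ (X i ⁻¹' {c}) = μ (X 0 ⁻¹' {c}) := by
  rw [← Measure.map_apply (hmeas i) (measurableSet_singleton c), hident i,
    Measure.map_apply (hmeas 0) (measurableSet_singleton c)]

lemma meas_cyl (hmeas : ∀ i, Measurable (X i))
    (hindep : iIndepFun X μ)
    (hident : ∀ i, μ.map (X i) = μ.map (X 0))
    (a p : ℕ) (v : Fin p → (Fin d → ℤ)) :
    μ (⋂ i : Fin p, X (a + (i:ℕ)) ⁻¹' {v i}) = ∏ i : Fin p, μ (X 0 ⁻¹' {v i}) := by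
  classical
  set sets : ℕ → Set (Fin d → ℤ) := fun n =>
    if h : a ≤ n ∧ n < a + p then {v ⟨n - a, by omega⟩} else Set.univ with hsets
  have hseteq : (⋂ i : Fin p, X (a + (i:ℕ)) ⁻¹' {v i})
      = ⋂ n ∈ Finset.Ico a (a + p), X n ⁻¹' sets n := by
    ext ω
    simp only [Set.mem_iInter, Set.mem_preimage, Set.mem_singleton_iff]
    constructor
    · intro h n hn
      rw [Finset.mem_Ico] at hn
      have hc : a ≤ n ∧ n < a + p := hn
      rw [hsets]
      simp only [hc, and_self, dif_pos]
      have h2 := h ⟨n - a, by omega⟩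
      have h3 : a + ((⟨n - a, by omega⟩ : Fin p) : ℕ) = n := by simp; omega
      rw [h3] at h2
      simpa using h2
    · intro h i
      have hmem : a + (i:ℕ) ∈ Finset.Ico a (a + p) := by
        rw [Finset.mem_Ico]; omega
      have h2 := h (a + (i:ℕ)) hmem
      have hc : a ≤ a + (i:ℕ) ∧ a + (i:ℕ) < a + p := by omega
      rw [hsets] at h2
      simp only [hc, and_self, dif_pos] at h2
      have h3 : (⟨a + (i:ℕ) - a, by omega⟩ : Fin p) = i := by
        apply Fin.ext; simp
      rwa [h3] at h2
  rw [hseteq]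
  rw [hindep.measure_inter_preimage_eq_mul (Finset.Ico a (a+p))
    (fun n _ => (Set.to_countable (sets n)).measurableSet)]
  rw [Finset.prod_Ico_eq_prod_range]
  have hps : a + p - a = p := by omega
  rw [hps]
  have hterm : ∀ n ∈ Finset.range p,
      μ (X (a + n) ⁻¹' sets (a + n))
        = (fun n => if h : n < p then μ (X 0 ⁻¹' {v ⟨n, h⟩}) else 1) n := by
    intro n hn
    have hn' := Finset.mem_range.mp hn
    have hc : a ≤ a + n ∧ a + n < a + p := by omega
    rw [hsets]
    simp only [hc, and_self, dif_pos, hn']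
    have h3 : (⟨a + n - a, by omega⟩ : Fin p) = ⟨n, hn'⟩ := by
      apply Fin.ext; simp
    rw [h3, meas_single hmeas hident]
  rw [Finset.prod_congr rfl hterm, ← Fin.prod_univ_eq_prod_range]
  exact Finset.prod_congr rfl fun i _ => by simp [i.isLt]

lemma meas_block (hmeas : ∀ i, Measurable (X i))
    (hindep : iIndepFun X μ)
    (hident : ∀ i, μ.map (X i) = μ.map (X 0))
    (a p : ℕ) (s : Set (Fin p → (Fin d → ℤ))) :
    μ (tup d X a p ⁻¹' s) = ∑' v : s, ∏ i : Fin p, μ (X 0 ⁻¹' {(v : Fin p → (Fin d → ℤ)) i}) := by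
  have hset : tup d X a p ⁻¹' s
      = ⋃ v : s, ⋂ i : Fin p, X (a + (i:ℕ)) ⁻¹' {(v : Fin p → (Fin d → ℤ)) i} := by
    ext ω
    simp only [Set.mem_preimage, Set.mem_iUnion, Set.mem_iInter, Set.mem_singleton_iff]
    constructor
    · intro h; exact ⟨⟨tup d X a p ω, h⟩, fun i => rfl⟩
    · rintro ⟨v, hv⟩
      have : tup d X a p ω = (v : Fin p → (Fin d → ℤ)) := funext hv
      rw [this]; exact v.2
  rw [hset, measure_iUnion]
  · exact tsum_congr fun v => meas_cyl hmeas hindep hident a p _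
  · intro v w hvw
    simp only [Function.onFun, Set.disjoint_left]
    intro ω hv hw
    simp only [Set.mem_iInter, Set.mem_preimage, Set.mem_singleton_iff] at hv hw
    exact hvw (Subtype.ext (funext fun i => (hv i).symm.trans (hw i)))
  · intro v
    exact MeasurableSet.iInter fun i => (hmeas _) (measurableSet_singleton _)

lemma meas_shift (hmeas : ∀ i, Measurable (X i))
    (hindep : iIndepFun X μ)
    (hident : ∀ i, μ.map (X i) = μ.map (X 0))
    (a b p : ℕ) (s : Set (Fin p → (Fin d → ℤ))) :
    μ (tup d X a p ⁻¹' s) = μ (tup d X b p ⁻¹' s) := by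
  rw [meas_block hmeas hindep hident a p s, meas_block hmeas hindep hident b p s]

lemma blockIndep (hmeas : ∀ i, Measurable (X i))
    (hindep : iIndepFun X μ)
    {a p b q : ℕ} (hab : a + p ≤ b)
    (s : Set (Fin p → (Fin d → ℤ))) (t : Set (Fin q → (Fin d → ℤ))) :
    μ (tup d X a p ⁻¹' s ∩ tup d X b q ⁻¹' t)
      = μ (tup d X a p ⁻¹' s) * μ (tup d X b q ⁻¹' t) := by
  classical
  have hST : Disjoint (Finset.Ico a (a+p)) (Finset.Ico b (b+q)) := by
    rw [Finset.disjoint_left]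
    intro n hn hn'
    rw [Finset.mem_Ico] at hn hn'
    omega
  have hI := hindep.indepFun_finset (Finset.Ico a (a+p)) (Finset.Ico b (b+q)) hST hmeas
  set rS : ((i : Finset.Ico a (a+p)) → Fin d → ℤ) → (Fin p → Fin d → ℤ) :=
    fun g i => g ⟨a + (i:ℕ), by rw [Finset.mem_Ico]; omega⟩ with hrS
  set rT : ((i : Finset.Ico b (b+q)) → Fin d → ℤ) → (Fin q → Fin d → ℤ) :=
    fun g i => g ⟨b + (i:ℕ), by rw [Finset.mem_Ico]; omega⟩ with hrT
  have h1 : tup d X a p ⁻¹' s = (fun ω (i : Finset.Ico a (a+p)) => X (i:ℕ) ω) ⁻¹' (rS ⁻¹' s) :=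
    rfl
  have h2 : tup d X b q ⁻¹' t = (fun ω (i : Finset.Ico b (b+q)) => X (i:ℕ) ω) ⁻¹' (rT ⁻¹' t) :=
    rfl
  rw [h1, h2]
  exact hI.measure_inter_preimage_eq_mul (rS ⁻¹' s) (rT ⁻¹' t)
    (Set.to_countable _).measurableSet (Set.to_countable _).measurableSet





variable {Ω : Type*} [MeasurableSpace Ω] {μ : Measure Ω} [IsProbabilityMeasure μ]
variable {d : ℕ} {X : ℕ → Ω → (Fin d → ℤ)}

def SE (d : ℕ) (h j : ℕ) : Set (Fin h → Fin d → ℤ) :=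
  {g | j ≤ ((Finset.Icc 1 h).filter (fun u => psum d g u = 0)).card}

def SF (d : ℕ) (s : ℕ) : Set (Fin (s+1) → Fin d → ℤ) :=
  {g | psum d g (s+1) = 0 ∧ ∀ r, 1 ≤ r → r < s+1 → psum d g r ≠ 0}

lemma cnt_eq_tup (t h : ℕ) (ω : Ω) :
    (j ≤ cnt d X t h ω) ↔ tup d X t h ω ∈ SE d h j := by
  unfold cnt SE
  simp only [Set.mem_setOf_eq]
  have : ∀ u ∈ Finset.Icc 1 h, (bsum d X t u ω = 0 ↔ psum d (tup d X t h ω) u = 0) := by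
    intro u hu
    rw [psum_tup t h ω (Finset.mem_Icc.mp hu).2]
  rw [Finset.filter_congr (fun u hu => by rw [this u hu])]

lemma D_eq_tup (t h j : ℕ) :
    {ω : Ω | j ≤ cnt d X t h ω} = tup d X t h ⁻¹' SE d h j := by
  ext ω; exact cnt_eq_tup t h ω

lemma Fv_eq_tup (t s : ℕ) : Fv d X t (s+1) = tup d X t (s+1) ⁻¹' SF d s := by
  ext ω
  unfold Fv SF
  simp only [Set.mem_setOf_eq, Set.mem_preimage]
  constructor
  · rintro ⟨h1, h2⟩
    refine ⟨by rw [psum_tup t (s+1) ω (le_refl _)]; exact h1, fun r hr1 hr2 => ?_⟩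
    rw [psum_tup t (s+1) ω (by omega : r ≤ s+1)]
    exact h2 r hr1 hr2
  · rintro ⟨h1, h2⟩
    rw [psum_tup t (s+1) ω (le_refl _)] at h1
    refine ⟨h1, fun r hr1 hr2 => ?_⟩
    have := h2 r hr1 hr2
    rwa [psum_tup t (s+1) ω (by omega : r ≤ s+1)] at this

lemma cnt_mono (t : ℕ) (ω : Ω) : Monotone (fun h => cnt d X t h ω) := by
  intro h h' hh
  unfold cnt
  exact Finset.card_le_card (Finset.filter_subset_filter _ (Finset.Icc_subset_Icc_right hh))

lemma Ev_meas (hmeas : ∀ i, Measurable (X i)) (t j : ℕ) : MeasurableSet (Ev d X t j) := by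
  unfold Ev
  refine MeasurableSet.iUnion fun h => ?_
  rw [D_eq_tup]
  exact meas_tup hmeas t h (Set.to_countable _).measurableSet

lemma Fv_meas (hmeas : ∀ i, Measurable (X i)) (t s : ℕ) : MeasurableSet (Fv d X t (s+1)) := by
  rw [Fv_eq_tup]
  exact meas_tup hmeas t (s+1) (Set.to_countable _).measurableSet

lemma Ev_shift (hmeas : ∀ i, Measurable (X i))
    (hindep : iIndepFun X μ)
    (hident : ∀ i, μ.map (X i) = μ.map (X 0)) (t j : ℕ) :
    μ (Ev d X t j) = μ (Ev d X 0 j) := by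
  unfold Ev
  have h1 : ∀ t : ℕ, μ (⋃ h : ℕ, {ω : Ω | j ≤ cnt d X t h ω})
      = ⨆ h : ℕ, μ {ω : Ω | j ≤ cnt d X t h ω} := by
    intro t
    refine Directed.measure_iUnion ?_
    intro h h'
    rcases le_total h h' with hle | hle
    · exact ⟨h', fun ω hω => le_trans hω (cnt_mono t ω hle), fun ω hω => hω⟩
    · exact ⟨h, fun ω hω => hω, fun ω hω => le_trans hω (cnt_mono t ω hle)⟩
  rw [h1, h1]
  congr 1
  funext h
  rw [D_eq_tup, D_eq_tup, meas_shift hmeas hindep hident t 0 h (SE d h j)]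

lemma Fv_disj (t : ℕ) :
    Pairwise (Function.onFun Disjoint (fun s => Fv d X t (s+1))) := by
  intro s s' hss
  simp only [Function.onFun, Set.disjoint_left]
  intro ω h1 h2
  rcases lt_or_gt_of_ne hss with h | h
  · exact h2.2 (s+1) (by omega) (by omega) h1.1
  · exact h1.2 (s'+1) (by omega) (by omega) h2.1

lemma Fv_subset_Ev (t s : ℕ) : Fv d X t (s+1) ⊆ Ev d X t 1 := by
  intro ω h
  refine Set.mem_iUnion.mpr ⟨s+1, ?_⟩
  show 1 ≤ cnt d X t (s+1) ω
  rw [Nat.one_le_iff_ne_zero]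
  intro hc
  have hmem : (s+1) ∈ (Finset.Icc 1 (s+1)).filter (fun u => bsum d X t u ω = 0) := by
    rw [Finset.mem_filter, Finset.mem_Icc]
    exact ⟨⟨by omega, le_refl _⟩, h.1⟩
  unfold cnt at hc
  rw [Finset.card_eq_zero] at hc
  exact absurd (hc ▸ hmem) (Finset.notMem_empty _)

lemma Ev_succ_subset (t j : ℕ) :
    Ev d X t (j+1) ⊆ ⋃ s : ℕ, (Fv d X t (s+1) ∩ Ev d X (t+s+1) j) := by
  intro ω hω
  obtain ⟨h, hh⟩ := Set.mem_iUnion.mp hω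
  simp only [Set.mem_setOf_eq] at hh
  set Φ := (Finset.Icc 1 h).filter (fun u => bsum d X t u ω = 0) with hΦ
  have hcard0 : j + 1 ≤ Φ.card := hh
  have hne : Φ.Nonempty := Finset.card_pos.mp (by omega)
  set s₀ := Φ.min' hne with hs₀
  have hs₀mem : s₀ ∈ Φ := Finset.min'_mem _ _
  obtain ⟨hs₀Icc, hs₀b⟩ := Finset.mem_filter.mp hs₀mem
  obtain ⟨hs₀1, hs₀h⟩ := Finset.mem_Icc.mp hs₀Icc
  refine Set.mem_iUnion.mpr ⟨s₀ - 1, ?_⟩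
  have hss : s₀ - 1 + 1 = s₀ := by omega
  constructor
  · rw [hss]
    refine ⟨hs₀b, fun r hr1 hr2 hr0 => ?_⟩
    have hrΦ : r ∈ Φ := by
      rw [hΦ, Finset.mem_filter, Finset.mem_Icc]
      exact ⟨⟨hr1, by omega⟩, hr0⟩
    have := Finset.min'_le Φ r hrΦ
    omega
  · have htt : t + (s₀ - 1) + 1 = t + s₀ := by omega
    rw [htt]
    refine Set.mem_iUnion.mpr ⟨h - s₀, ?_⟩
    show j ≤ cnt d X (t + s₀) (h - s₀) ω
    have hcard : (Φ.erase s₀).card ≤ cnt d X (t + s₀) (h - s₀) ω := by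
      unfold cnt
      refine Finset.card_le_card_of_injOn (fun r => r - s₀) ?_ ?_
      · intro r hr
        obtain ⟨hrne, hrΦ⟩ := Finset.mem_erase.mp hr
        obtain ⟨hrIcc, hrb⟩ := Finset.mem_filter.mp hrΦ
        obtain ⟨hr1, hrh⟩ := Finset.mem_Icc.mp hrIcc
        have hlt : s₀ < r := lt_of_le_of_ne (Finset.min'_le Φ r hrΦ) (Ne.symm hrne)
        simp only [Finset.mem_coe, Finset.mem_filter, Finset.mem_Icc]
        refine ⟨⟨?_, ?_⟩, ?_⟩
        · omega
        · omega
        have hadd := bsum_add (d := d) (X := X) t s₀ (r - s₀) ω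
        have : s₀ + (r - s₀) = r := by omega
        rw [this, hrb, hs₀b] at hadd
        have : bsum d X (t + s₀) (r - s₀) ω = 0 := by
          have := hadd.symm
          simpa using this
        exact this
      · intro r hr r' hr' hrr
        have hrr' : r - s₀ = r' - s₀ := hrr
        have h1 : s₀ < r := lt_of_le_of_ne (Finset.min'_le Φ r (Finset.mem_of_mem_erase hr))
          (Ne.symm (Finset.ne_of_mem_erase hr))
        have h2 : s₀ < r' := lt_of_le_of_ne (Finset.min'_le Φ r' (Finset.mem_of_mem_erase hr'))
          (Ne.symm (Finset.ne_of_mem_erase hr'))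
        omega
    have herase : (Φ.erase s₀).card = Φ.card - 1 := Finset.card_erase_of_mem hs₀mem
    omega

lemma Ev_le (hmeas : ∀ i, Measurable (X i))
    (hindep : iIndepFun X μ)
    (hident : ∀ i, μ.map (X i) = μ.map (X 0)) :
    ∀ (j t : ℕ), μ (Ev d X t j) ≤ μ (Ev d X 0 1) ^ j := by
  intro j
  induction j with
  | zero => intro t; simpa using prob_le_one
  | succ j ih =>
    intro t
    have key : ∀ s : ℕ, μ (Fv d X t (s+1) ∩ Ev d X (t+s+1) j)
        ≤ μ (Fv d X t (s+1)) * μ (Ev d X 0 1) ^ j := by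
      intro s
      have hEv : Ev d X (t+s+1) j = ⋃ h : ℕ, {ω : Ω | j ≤ cnt d X (t+s+1) h ω} := rfl
      have hsplit : Fv d X t (s+1) ∩ Ev d X (t+s+1) j
          = ⋃ h : ℕ, (Fv d X t (s+1) ∩ {ω : Ω | j ≤ cnt d X (t+s+1) h ω}) := by
        rw [hEv, Set.inter_iUnion]
      rw [hsplit]
      rw [Directed.measure_iUnion ?_]
      · refine iSup_le fun h => ?_
        rw [Fv_eq_tup, D_eq_tup]
        rw [blockIndep hmeas hindep (by omega : t + (s+1) ≤ t+s+1) (SF d s) (SE d h j)]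
        refine mul_le_mul_right ?_ _
        rw [← D_eq_tup]
        calc μ {ω : Ω | j ≤ cnt d X (t+s+1) h ω} ≤ μ (Ev d X (t+s+1) j) :=
              measure_mono (Set.subset_iUnion (fun h => {ω : Ω | j ≤ cnt d X (t+s+1) h ω}) h)
          _ ≤ μ (Ev d X 0 1) ^ j := ih (t+s+1)
      · intro h h'
        rcases le_total h h' with hle | hle
        · exact ⟨h', fun ω hω => ⟨hω.1, le_trans hω.2 (cnt_mono _ ω hle)⟩, fun ω hω => hω⟩
        · exact ⟨h, fun ω hω => hω, fun ω hω => ⟨hω.1, le_trans hω.2 (cnt_mono _ ω hle)⟩⟩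
    calc μ (Ev d X t (j+1))
        ≤ μ (⋃ s : ℕ, (Fv d X t (s+1) ∩ Ev d X (t+s+1) j)) :=
          measure_mono (Ev_succ_subset t j)
      _ ≤ ∑' s : ℕ, μ (Fv d X t (s+1) ∩ Ev d X (t+s+1) j) := measure_iUnion_le _
      _ ≤ ∑' s : ℕ, μ (Fv d X t (s+1)) * μ (Ev d X 0 1) ^ j := ENNReal.tsum_le_tsum key
      _ = (∑' s : ℕ, μ (Fv d X t (s+1))) * μ (Ev d X 0 1) ^ j := ENNReal.tsum_mul_right
      _ = μ (⋃ s : ℕ, Fv d X t (s+1)) * μ (Ev d X 0 1) ^ j := by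
          rw [measure_iUnion (Fv_disj t) (fun s => Fv_meas hmeas t s)]
      _ ≤ μ (Ev d X t 1) * μ (Ev d X 0 1) ^ j :=
          mul_le_mul_left (measure_mono (Set.iUnion_subset fun s => Fv_subset_Ev t s)) _
      _ = μ (Ev d X 0 1) * μ (Ev d X 0 1) ^ j := by
          rw [Ev_shift hmeas hindep hident t 1]
      _ = μ (Ev d X 0 1) ^ (j+1) := by rw [pow_succ, mul_comm]



variable {Ω : Type*} [MeasurableSpace Ω] {μ : Measure Ω} [IsProbabilityMeasure μ]
variable {d : ℕ} {X : ℕ → Ω → (Fin d → ℤ)}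

lemma cnt_def (d : ℕ) {Ω : Type*} (X : ℕ → Ω → (Fin d → ℤ)) (t h : ℕ) (ω : Ω) :
  cnt d X t h ω = ((Finset.Icc 1 h).filter (fun s => bsum d X t s ω = 0)).card := rfl

lemma localTime_le_cnt (n i : ℕ) (hin : i ≤ n) (ω : Ω) :
    ∃ t, t ≤ n ∧ localTime d X n (walk d X i ω) ω ≤ 1 + cnt d X t (n - t) ω := by
  have hex : ∃ t, walk d X t ω = walk d X i ω := ⟨i, rfl⟩
  set x := walk d X i ω with hx
  set t := Nat.find hex with htdef
  have ht_spec : walk d X t ω = x := Nat.find_spec hex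
  have ht_min : ∀ r, r < t → walk d X r ω ≠ x := fun r hr => Nat.find_min hex hr
  have hti : t ≤ i := Nat.find_min' hex rfl
  refine ⟨t, le_trans hti hin, ?_⟩
  unfold localTime
  rw [Finset.range_eq_Ico, ← Finset.sum_Ico_consecutive _ (Nat.zero_le (t+1))
    (by omega : t+1 ≤ n+1)]
  have h1 : ∑ i' ∈ Finset.Ico 0 (t+1), (if walk d X i' ω = x then 1 else 0) ≤ 1 := by
    rw [← Finset.range_eq_Ico, Finset.sum_range_succ]
    have hz : ∑ i' ∈ Finset.range t, (if walk d X i' ω = x then 1 else 0) = 0 :=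
      Finset.sum_eq_zero fun r hr => by
        simp [ht_min r (Finset.mem_range.mp hr)]
    rw [hz]
    simp [ht_spec]
  have h2 : ∑ i' ∈ Finset.Ico (t+1) (n+1), (if walk d X i' ω = x then 1 else 0)
      ≤ cnt d X t (n - t) ω := by
    rw [Finset.sum_Ico_eq_sum_range]
    have hnt : n + 1 - (t + 1) = n - t := by omega
    rw [hnt]
    have hcard : ∑ j ∈ Finset.range (n - t), (if walk d X (t+1+j) ω = x then 1 else 0)
        = ((Finset.range (n - t)).filter (fun j => walk d X (t+1+j) ω = x)).card := by
      rw [Finset.card_filter]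
    rw [hcard, cnt_def]
    refine Finset.card_le_card_of_injOn (fun j => j + 1) ?_ ?_
    · intro j hj
      obtain ⟨hj1, hj2⟩ := Finset.mem_filter.mp hj
      have hj3 := Finset.mem_range.mp hj1
      simp only [Finset.mem_coe, Finset.mem_filter, Finset.mem_Icc]
      refine ⟨⟨show 1 ≤ j + 1 by omega, show j + 1 ≤ n - t by omega⟩,
        show bsum d X t (j+1) ω = 0 from ?_⟩
      have heq : t + 1 + j = t + (j + 1) := by omega
      rw [heq] at hj2
      rw [← walk_eq_iff (t) (j+1) ω, hj2, ht_spec]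
    · intro j _ j' _ hjj
      have hjj' : j + 1 = j' + 1 := hjj
      omega
  omega


end SRW9

/-- Almost sure eventual upper bound for the maximal local time:
`l(n) ≤ (1/λ_*)(log n + log_{(2)} n + ... + log_{(m-1)} n + (1+ε) log_{(m)} n)`. -/
theorem stmt9
    {Ω : Type*} [MeasurableSpace Ω] (μ : Measure Ω) [IsProbabilityMeasure μ]
    (d : ℕ) (hd : 1 ≤ d)
    (X : ℕ → Ω → (Fin d → ℤ))
    (hmeas : ∀ i, Measurable (X i))
    (hindep : iIndepFun X μ)
    (hident : ∀ i, μ.map (X i) = μ.map (X 0))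
    (hγ0 : 0 < noReturnProb d μ X) (hγ1 : noReturnProb d μ X < 1)
    (m : ℕ) (hm : 1 ≤ m) (ε : ℝ) (hε : 0 < ε) :
    ∀ᵐ ω ∂μ, ∃ N : ℕ, ∀ n : ℕ, N ≤ n →
      (maxLocalTime d X n ω : ℝ) ≤
        (1 / Real.log (1 / (1 - noReturnProb d μ X))) *
          ((∑ k ∈ Finset.Ico 1 m, itlog k n) + (1 + ε) * itlog m n) := by

  classical
  have hwalk_meas : ∀ nn : ℕ, Measurable (walk d X nn) := by
    intro nn
    unfold walk
    exact Finset.measurable_sum _ fun i _ => hmeas i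
  set γ := noReturnProb d μ X with hγdef
  set NRset : Set Ω := {ω | ∀ n : ℕ, 1 ≤ n → walk d X n ω ≠ 0} with hNRdef
  have hNRmeas : MeasurableSet NRset := by
    have h : NRset = ⋂ (n : ℕ) (_ : 1 ≤ n), (walk d X n) ⁻¹' ({0}ᶜ) := by
      ext ω
      simp [hNRdef, Set.mem_iInter]
    rw [h]
    exact MeasurableSet.iInter fun n => MeasurableSet.iInter fun _ =>
      (hwalk_meas n) (measurableSet_singleton 0).compl
  have hγNR : γ = (μ NRset).toReal := rfl
  have hq0' : (0:ℝ) < 1 - γ := by linarith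
  have hEvNR : SRW9.Ev d X 0 1 = NRsetᶜ := by
    ext ω
    simp only [SRW9.Ev, Set.mem_iUnion, Set.mem_setOf_eq, Set.mem_compl_iff, hNRdef]
    constructor
    · rintro ⟨h, hh⟩
      rw [SRW9.cnt_def] at hh
      have hpos : 0 < ((Finset.Icc 1 h).filter (fun s => SRW9.bsum d X 0 s ω = 0)).card := hh
      obtain ⟨u, hu⟩ := Finset.card_pos.mp hpos
      obtain ⟨huIcc, hub⟩ := Finset.mem_filter.mp hu
      obtain ⟨hu1, -⟩ := Finset.mem_Icc.mp huIcc
      intro hall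
      exact hall u hu1 (by rw [← SRW9.bsum_zero_walk]; exact hub)
    · intro hno
      push_neg at hno
      obtain ⟨u, hu1, hu0⟩ := hno
      refine ⟨u, ?_⟩
      show 1 ≤ SRW9.cnt d X 0 u ω
      rw [SRW9.cnt_def]
      refine Finset.card_pos.mpr ⟨u, Finset.mem_filter.mpr
        ⟨Finset.mem_Icc.mpr ⟨hu1, le_refl _⟩, ?_⟩⟩
      rw [SRW9.bsum_zero_walk]
      exact hu0
  have hqE : μ (SRW9.Ev d X 0 1) = ENNReal.ofReal (1 - γ) := by
    rw [hEvNR, prob_compl_eq_one_sub hNRmeas]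
    have h1 : μ NRset = ENNReal.ofReal γ := by
      rw [hγNR, ENNReal.ofReal_toReal (measure_ne_top μ _)]
    rw [h1, ← ENNReal.ofReal_one, ← ENNReal.ofReal_sub _ (by linarith : (0:ℝ) ≤ γ)]
  set lam := Real.log (1 / (1 - γ)) with hlam
  have hlam_pos : 0 < lam := Real.log_pos (by rw [lt_div_iff₀ hq0']; linarith)
  set A : ℝ → ℝ := fun x => (∑ k ∈ Finset.Ico 1 m, itlog k x) + (1+ε) * itlog m x with hA
  set av : ℕ → ℝ := fun t => (1/lam) * A t with hav
  have hAtend : Tendsto A atTop atTop := by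
    have h1 : Tendsto (fun x => (1+ε) * itlog m x) atTop atTop :=
      (SRW9.itlog_tendsto m).const_mul_atTop (by linarith)
    refine tendsto_atTop_mono' atTop ?_ h1
    filter_upwards [eventually_ge_atTop (SRW9.EE m)] with x hx
    have hsum_nonneg : 0 ≤ ∑ k ∈ Finset.Ico 1 m, itlog k x :=
      Finset.sum_nonneg fun k hk => le_trans (by norm_num)
        (SRW9.le_itlog k (SRW9.EE_le_of_le (Finset.mem_Ico.mp hk).2.le hx))
    simp only [hA]
    linarith
  have havtend : Tendsto av atTop atTop := by
    have h2 : Tendsto (fun t : ℕ => A t) atTop atTop :=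
      hAtend.comp tendsto_natCast_atTop_atTop
    exact h2.const_mul_atTop (by positivity)
  have havmono : ∀ t n : ℕ, SRW9.EE m ≤ (t:ℝ) → t ≤ n → av t ≤ av n := by
    intro t n ht htn
    have hcast : (t:ℝ) ≤ (n:ℝ) := Nat.cast_le.mpr htn
    have hAmono : A t ≤ A n := by
      simp only [hA]
      have h1 : ∀ k ∈ Finset.Ico 1 m, itlog k (t:ℝ) ≤ itlog k (n:ℝ) := fun k hk =>
        SRW9.itlog_mono k (SRW9.EE_le_of_le (Finset.mem_Ico.mp hk).2.le ht) hcast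
      have h2 : itlog m (t:ℝ) ≤ itlog m (n:ℝ) := SRW9.itlog_mono m ht hcast
      have h3 := Finset.sum_le_sum h1
      have h4 : (1+ε) * itlog m (t:ℝ) ≤ (1+ε) * itlog m (n:ℝ) :=
        mul_le_mul_of_nonneg_left h2 (by linarith)
      linarith
    exact mul_le_mul_of_nonneg_left hAmono (by positivity)
  obtain ⟨n₁, hn₁⟩ := eventually_atTop.mp (havtend.eventually_ge_atTop 1)
  set n₀ := max n₁ ⌈SRW9.EE m⌉₊ with hn₀def
  have hn₀EE : ∀ t : ℕ, n₀ ≤ t → SRW9.EE m ≤ (t:ℝ) := by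
    intro t ht
    have h1 : ⌈SRW9.EE m⌉₊ ≤ t := le_trans (le_max_right _ _) ht
    exact le_trans (Nat.le_ceil _) (Nat.cast_le.mpr h1)
  have hn₀1 : ∀ t : ℕ, n₀ ≤ t → 1 ≤ av t := fun t ht =>
    hn₁ t (le_trans (le_max_left _ _) ht)
  set K : ℕ → ℕ := fun t => ⌈av t⌉₊ - 1 with hK
  set s : ℕ → Set Ω := fun t => if n₀ ≤ t then SRW9.Ev d X t (K t) else ∅ with hs
  have hsum : (∑' t : ℕ, μ (s t)) ≠ ⊤ := by
    set Tt : ℕ → ℝ := fun t => if SRW9.EE m ≤ (t:ℝ) then (SRW9.hfun m ε t)⁻¹ else 0 with hTt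
    have hTt_nonneg : ∀ t, 0 ≤ Tt t := by
      intro t
      rw [hTt]
      by_cases h : SRW9.EE m ≤ (t:ℝ)
      · simp only [h, if_true]
        exact (inv_pos.mpr (SRW9.hfun_pos hε h)).le
      · simp [h]
    have hle : ∀ t : ℕ, μ (s t) ≤ ENNReal.ofReal ((1-γ)⁻¹ * Tt t) := by
      intro t
      by_cases ht : n₀ ≤ t
      · have hEEt : SRW9.EE m ≤ (t:ℝ) := hn₀EE t ht
        have hat1 : 1 ≤ av t := hn₀1 t ht
        have hceil1 : 1 ≤ ⌈av t⌉₊ := Nat.one_le_ceil_iff.mpr (by linarith)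
        have hreal : (1-γ) ^ (K t) ≤ (1-γ)⁻¹ * Tt t := by
          have hKcast : ((K t : ℕ):ℝ) = (⌈av t⌉₊:ℝ) - 1 := by
            rw [hK]
            push_cast [hceil1]
            ring
          have hexp : av t - 1 ≤ ((K t : ℕ) : ℝ) := by
            rw [hKcast]
            have := Nat.le_ceil (av t)
            linarith
          have h1 : (1-γ) ^ (K t) = (1-γ) ^ (((K t : ℕ)):ℝ) :=
            (Real.rpow_natCast _ _).symm
          have h2 : (1-γ) ^ (((K t:ℕ)):ℝ) ≤ (1-γ) ^ (av t - 1) :=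
            Real.rpow_le_rpow_of_exponent_ge hq0' (by linarith) hexp
          have h3 : (1-γ) ^ (av t - 1) = (1-γ) ^ (av t) * (1-γ)⁻¹ := by
            rw [show av t - 1 = av t + (-1) by ring, Real.rpow_add hq0', Real.rpow_neg_one]
          have h4 : (1-γ) ^ (av t) = Real.exp (-(A t)) := by
            have havt : av t = 1/lam * A t := rfl
            have hlog : Real.log (1-γ) = -lam := by
              rw [hlam, one_div, Real.log_inv]
              ring
            rw [Real.rpow_def_of_pos hq0', hlog, havt]
            congr 1
            field_simp
          have h5 : Real.exp (-(A t)) = (SRW9.hfun m ε t)⁻¹ := by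
            rw [Real.exp_neg]
            congr 1
            exact SRW9.exp_A hm hε hEEt
          have h6 : Tt t = (SRW9.hfun m ε t)⁻¹ := by rw [hTt]; simp [hEEt]
          have h7 : 0 ≤ (1-γ)⁻¹ := (inv_pos.mpr hq0').le
          rw [h1, h6]
          calc (1-γ) ^ (((K t:ℕ)):ℝ) ≤ (1-γ) ^ (av t - 1) := h2
            _ = (1-γ) ^ (av t) * (1-γ)⁻¹ := h3
            _ = Real.exp (-(A t)) * (1-γ)⁻¹ := by rw [h4]
            _ = (SRW9.hfun m ε t)⁻¹ * (1-γ)⁻¹ := by rw [h5]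
            _ = (1-γ)⁻¹ * (SRW9.hfun m ε t)⁻¹ := by ring
        calc μ (s t) = μ (SRW9.Ev d X t (K t)) := by rw [hs]; simp [ht]
          _ ≤ μ (SRW9.Ev d X 0 1) ^ (K t) := SRW9.Ev_le hmeas hindep hident (K t) t
          _ = ENNReal.ofReal ((1-γ) ^ (K t)) := by
              rw [hqE, ← ENNReal.ofReal_pow hq0'.le]
          _ ≤ ENNReal.ofReal ((1-γ)⁻¹ * Tt t) := ENNReal.ofReal_le_ofReal hreal
      · have h0 : μ (s t) = 0 := by rw [hs]; simp [ht]
        rw [h0]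
        exact bot_le
    have hsummable : Summable (fun t : ℕ => (1-γ)⁻¹ * Tt t) :=
      (SRW9.summable_inv_hfun hm hε).mul_left _
    have hnn : ∀ t : ℕ, 0 ≤ (1-γ)⁻¹ * Tt t := fun t =>
      mul_nonneg (inv_pos.mpr hq0').le (hTt_nonneg t)
    have hfinal : (∑' t : ℕ, μ (s t)) ≤ ENNReal.ofReal (∑' t : ℕ, (1-γ)⁻¹ * Tt t) := by
      calc (∑' t : ℕ, μ (s t)) ≤ ∑' t : ℕ, ENNReal.ofReal ((1-γ)⁻¹ * Tt t) :=
            ENNReal.tsum_le_tsum hle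
        _ = ENNReal.ofReal (∑' t : ℕ, (1-γ)⁻¹ * Tt t) :=
            (ENNReal.ofReal_tsum_of_nonneg hnn hsummable).symm
    exact ne_top_of_le_ne_top ENNReal.ofReal_ne_top hfinal
  have hBC := MeasureTheory.ae_finite_setOf_mem hsum
  have hG : μ (⋃ t : ℕ, ⋂ j : ℕ, SRW9.Ev d X t j) = 0 := by
    refine measure_iUnion_null fun t => ?_
    have hle2 : ∀ j : ℕ, μ (⋂ j' : ℕ, SRW9.Ev d X t j') ≤ (ENNReal.ofReal (1-γ)) ^ j := by
      intro j
      refine le_trans (measure_mono (Set.iInter_subset _ j)) ?_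
      rw [← hqE]
      exact SRW9.Ev_le hmeas hindep hident j t
    have htend0 : Tendsto (fun j : ℕ => (ENNReal.ofReal (1-γ))^j) atTop (nhds 0) :=
      ENNReal.tendsto_pow_atTop_nhds_zero_of_lt_one
        (by rw [← ENNReal.ofReal_one]; exact ENNReal.ofReal_lt_ofReal_iff_of_nonneg (by linarith) |>.mpr (by linarith))
    exact le_zero_iff.mp (ge_of_tendsto' htend0 hle2)
  have hGae : ∀ᵐ ω ∂μ, ω ∉ ⋃ t : ℕ, ⋂ j : ℕ, SRW9.Ev d X t j :=
    measure_eq_zero_iff_ae_notMem.mp hG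
  filter_upwards [hBC, hGae] with ω hfin hnG
  obtain ⟨B, hB⟩ := hfin.bddAbove
  set T := max n₀ (B+1) with hT
  have hnotEv : ∀ t, T ≤ t → ω ∉ SRW9.Ev d X t (K t) := by
    intro t ht
    have h1 : t ∉ {t | ω ∈ s t} := by
      intro hmem
      have := hB hmem
      omega
    simp only [Set.mem_setOf_eq, hs] at h1
    rw [if_pos (by omega : n₀ ≤ t)] at h1
    exact h1
  have hjt : ∀ t : ℕ, ∃ j, ω ∉ SRW9.Ev d X t j := by
    intro t
    by_contra hcon
    push_neg at hcon
    exact hnG (Set.mem_iUnion.mpr ⟨t, Set.mem_iInter.mpr hcon⟩)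
  choose jt hjt' using hjt
  set M : ℕ := (Finset.range T).sup jt with hM
  obtain ⟨N₂, hN₂⟩ := eventually_atTop.mp (havtend.eventually_ge_atTop (M:ℝ))
  refine ⟨max T N₂, fun n hn => ?_⟩
  have hnT : T ≤ n := le_trans (le_max_left _ _) hn
  have hnN₂ : N₂ ≤ n := le_trans (le_max_right _ _) hn
  obtain ⟨i, hi, hisup⟩ := Finset.exists_mem_eq_sup (Finset.range (n+1))
    ⟨0, Finset.mem_range.mpr (by omega)⟩
    (fun i => localTime d X n (walk d X i ω) ω)
  have hmax : maxLocalTime d X n ω = localTime d X n (walk d X i ω) ω := hisup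
  obtain ⟨t, htn, hlt⟩ := SRW9.localTime_le_cnt (d := d) (X := X) n i
    (Nat.lt_succ_iff.mp (Finset.mem_range.mp hi)) ω
  show (maxLocalTime d X n ω : ℝ) ≤ av n
  rcases le_or_gt T t with hTt | htT
  · have hnot := hnotEv t hTt
    have hcnt : SRW9.cnt d X t (n - t) ω < K t := by
      by_contra hcon
      push_neg at hcon
      exact hnot (Set.mem_iUnion.mpr ⟨n - t, hcon⟩)
    have hloc : localTime d X n (walk d X i ω) ω ≤ K t := by omega
    have htn₀ : n₀ ≤ t := le_trans (le_max_left _ _) hTt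
    have hEEt : SRW9.EE m ≤ (t:ℝ) := hn₀EE t htn₀
    have hat1 : 1 ≤ av t := hn₀1 t htn₀
    have hceil1 : 1 ≤ ⌈av t⌉₊ := Nat.one_le_ceil_iff.mpr (by linarith)
    have hKle : (K t : ℝ) ≤ av t := by
      rw [hK]
      push_cast [hceil1]
      have := Nat.ceil_lt_add_one (by linarith : (0:ℝ) ≤ av t)
      linarith
    have hcast : (maxLocalTime d X n ω : ℝ) ≤ (K t:ℝ) := by
      rw [hmax]
      exact_mod_cast hloc
    calc (maxLocalTime d X n ω : ℝ) ≤ (K t:ℝ) := hcast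
      _ ≤ av t := hKle
      _ ≤ av n := havmono t n hEEt htn
  · have hnotj := hjt' t
    have hcnt : SRW9.cnt d X t (n - t) ω < jt t := by
      by_contra hcon
      push_neg at hcon
      exact hnotj (Set.mem_iUnion.mpr ⟨n - t, hcon⟩)
    have hloc : localTime d X n (walk d X i ω) ω ≤ jt t := by omega
    have hjM : jt t ≤ M := Finset.le_sup (Finset.mem_range.mpr htT)
    have hcast : (maxLocalTime d X n ω : ℝ) ≤ (M:ℝ) := by
      rw [hmax]
      exact_mod_cast le_trans hloc hjM
    calc (maxLocalTime d X n ω:ℝ) ≤ (M:ℝ) := hcast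
      _ ≤ av n := hN₂ n hnN₂

end
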